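/- Let $t_0\ge 0$ and let $\lambda, Q \in C([t_0,\infty))\cap L^1([t_0,\infty))$. Suppose $y\colon [t_0,\infty)\to\mathbb{R}$ is differentiable and satisfies $y'(t) = \lambda(t)y(t) + Q(t)$ for $t\ge t_0$. Define $C_3 = \exp(\int_{t_0}^\infty |\lambda(\tau)|d\tau)$ and $y^+ = y(t_0)e^{\int_{t_0}^\infty \lambda(\tau)d\tau} + \int_{t_0}^\infty Q(s)e^{\int_s^\infty \lambda(\tau)d\tau}ds$. Then for all $t\ge t_0$, $|y(t)-y^+| \le C_3 \int_t^\infty (|y^+||\lambda(\tau)| + |Q(\tau)|)\,d\tau$. In particular, $y(t)\to y^+$ as $t\to\infty$. -/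

import Mathlib

open Real MeasureTheory Set

lemma aux_abs_exp_sub_one_le (x : ℝ) : |Real.exp x - 1| ≤ |x| * Real.exp |x| := by
  rcases le_or_gt 0 x with h | h
  · rw [abs_of_nonneg h, abs_of_nonneg (sub_nonneg.mpr (Real.one_le_exp h))]
    have h1 : (1 - x) * Real.exp x ≤ 1 := by
      have h2 := mul_le_mul_of_nonneg_right (Real.add_one_le_exp (-x)) (Real.exp_pos x).le
      rwa [← Real.exp_add, neg_add_cancel, Real.exp_zero, neg_add_eq_sub] at h2
    nlinarith
  · rw [abs_of_neg h, abs_of_nonpos (sub_nonpos.mpr (Real.exp_le_one_iff.mpr h.le))]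
    have h1 : x + 1 ≤ Real.exp x := Real.add_one_le_exp x
    have h2 : (1 : ℝ) ≤ Real.exp (-x) := Real.one_le_exp (by linarith)
    nlinarith

lemma aux_split (t0 a b : ℝ) (g : ℝ → ℝ) (hg : IntegrableOn g (Ici t0))
    (ha : t0 ≤ a) (hab : a ≤ b) :
    ∫ x in Ioi a, g x = (∫ x in a..b, g x) + ∫ x in Ioi b, g x := by
  rw [intervalIntegral.integral_of_le hab, ← setIntegral_union
    (Ioc_disjoint_Ioi le_rfl) measurableSet_Ioi
    (hg.mono_set (fun x hx => le_trans ha hx.1.le))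
    (hg.mono_set (fun x hx => le_trans (ha.trans hab) (le_of_lt hx))),
    Ioc_union_Ioi_eq_Ioi hab]

theorem linear_ode_scattering
    (t0 : ℝ) (ht0 : 0 ≤ t0) (lam Q y : ℝ → ℝ)
    (hlamC : ContinuousOn lam (Ici t0)) (hQC : ContinuousOn Q (Ici t0))
    (hlamI : IntegrableOn lam (Ici t0)) (hQI : IntegrableOn Q (Ici t0))
    (hode : ∀ t, t0 ≤ t → HasDerivAt y (lam t * y t + Q t) t) :
    (∀ t, t0 ≤ t →
      |y t - (y t0 * Real.exp (∫ τ in Ioi t0, lam τ)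
          + ∫ s in Ioi t0, Q s * Real.exp (∫ τ in Ioi s, lam τ))|
        ≤ Real.exp (∫ τ in Ioi t0, |lam τ|)
            * ∫ τ in Ioi t, (|y t0 * Real.exp (∫ τ' in Ioi t0, lam τ')
                + ∫ s in Ioi t0, Q s * Real.exp (∫ τ' in Ioi s, lam τ')| * |lam τ| + |Q τ|)) ∧
    Filter.Tendsto y Filter.atTop
      (nhds (y t0 * Real.exp (∫ τ in Ioi t0, lam τ)
          + ∫ s in Ioi t0, Q s * Real.exp (∫ τ in Ioi s, lam τ))) := by
  set M : ℝ → ℝ := fun t => ∫ τ in Ioi t, lam τ with hM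
  set A : ℝ := ∫ τ in Ioi t0, |lam τ| with hA
  have hsubIci : ∀ {t : ℝ}, t0 ≤ t → Ioi t ⊆ Ici t0 :=
    fun {t} ht x hx => le_trans ht (le_of_lt hx)
  have hlamAbsI : IntegrableOn (fun τ => |lam τ|) (Ici t0) := hlamI.abs
  -- |M s| ≤ A for s ≥ t0
  have htail_mono : ∀ s, t0 ≤ s → (∫ τ in Ioi s, |lam τ|) ≤ A := by
    intro s hs
    apply setIntegral_mono_set (hlamAbsI.mono_set Ioi_subset_Ici_self)
      (Filter.Eventually.of_forall fun τ => abs_nonneg _)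
      ((Ioi_subset_Ioi hs).eventuallyLE)
  have htail_nonneg : ∀ s, (0:ℝ) ≤ ∫ τ in Ioi s, |lam τ| :=
    fun s => setIntegral_nonneg measurableSet_Ioi (fun τ _ => abs_nonneg _)
  have hMabs : ∀ s, t0 ≤ s → |M s| ≤ ∫ τ in Ioi s, |lam τ| := by
    intro s hs
    simpa [Real.norm_eq_abs] using
      norm_integral_le_integral_norm (μ := volume.restrict (Ioi s)) lam
  have hMA : ∀ s, t0 ≤ s → |M s| ≤ A := fun s hs => (hMabs s hs).trans (htail_mono s hs)
  -- derivative of primitives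
  have hprimD : ∀ (g : ℝ → ℝ), ContinuousOn g (Ici t0) → IntegrableOn g (Ici t0) →
      ∀ x, t0 ≤ x → HasDerivWithinAt (fun u => ∫ s in t0..u, g s) (g x) (Ici t0) x := by
    intro g hgC hgI x hx
    have hii : IntervalIntegrable g volume t0 x := by
      apply (hgI.mono_set _).intervalIntegrable
      rw [uIcc_of_le hx]
      exact Icc_subset_Ici_self
    rcases eq_or_lt_of_le hx with rfl | hlt
    · exact intervalIntegral.integral_hasDerivWithinAt_right hii
        ⟨Ici t0, Filter.mem_of_superset self_mem_nhdsWithin Ioi_subset_Ici_self,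
          hgI.aestronglyMeasurable⟩
        ((hgC t0 Set.self_mem_Ici).mono Ioi_subset_Ici_self)
    · exact (intervalIntegral.integral_hasDerivAt_right hii
        ⟨Ici t0, Ici_mem_nhds hlt, hgI.aestronglyMeasurable⟩
        ((hgC x hx).continuousAt (Ici_mem_nhds hlt))).hasDerivWithinAt
  -- derivative of M
  have hderivM : ∀ x, t0 ≤ x → HasDerivWithinAt M (-(lam x)) (Ici t0) x := by
    intro x hx
    have h1 : HasDerivWithinAt (fun t => M t0 - ∫ τ in t0..t, lam τ) (0 - lam x) (Ici t0) x :=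
      (hasDerivWithinAt_const x _ (M t0)).sub (hprimD lam hlamC hlamI x hx)
    rw [zero_sub] at h1
    apply h1.congr _ _
    · intro u hu
      have := aux_split t0 t0 u lam hlamI le_rfl hu
      simp only [hM]
      linarith
    · have := aux_split t0 t0 x lam hlamI le_rfl hx
      simp only [hM]
      linarith
  have hMcont : ContinuousOn M (Ici t0) := fun x hx => (hderivM x hx).continuousWithinAt
  -- integrability of Q * exp M
  have hEcont : ContinuousOn (fun s => Q s * Real.exp (M s)) (Ici t0) :=
    hQC.mul (Real.continuous_exp.comp_continuousOn hMcont)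
  have hexpMA : ∀ s, t0 ≤ s → Real.exp (M s) ≤ Real.exp A := by
    intro s hs
    exact Real.exp_le_exp.mpr ((le_abs_self _).trans (hMA s hs))
  have hEI : IntegrableOn (fun s => Q s * Real.exp (M s)) (Ici t0) := by
    apply Integrable.mono (hQI.abs.const_mul (Real.exp A))
      (hEcont.aestronglyMeasurable measurableSet_Ici)
    rw [ae_restrict_iff' measurableSet_Ici]
    apply Filter.Eventually.of_forall
    intro s hs
    rw [Real.norm_eq_abs, Real.norm_eq_abs, abs_mul, Real.abs_exp, abs_mul, abs_abs,
      Real.abs_exp]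
    nlinarith [hexpMA s hs, abs_nonneg (Q s), Real.exp_pos (M s)]
  set yp := y t0 * Real.exp (M t0) + ∫ s in Ioi t0, Q s * Real.exp (M s) with hyp
  -- conservation law
  have hcons : ∀ t, t0 ≤ t → y t * Real.exp (M t) + (∫ s in Ioi t, Q s * Real.exp (M s)) = yp := by
    intro t ht
    set F : ℝ → ℝ := fun u => y u * Real.exp (M u) - ∫ s in t0..u, Q s * Real.exp (M s) with hF
    have hFderiv : ∀ x, t0 ≤ x → HasDerivWithinAt F 0 (Ici t0) x := by
      intro x hx
      have h1 : HasDerivWithinAt (fun u => y u * Real.exp (M u))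
          ((lam x * y x + Q x) * Real.exp (M x) + y x * (Real.exp (M x) * (-(lam x))))
          (Ici t0) x :=
        (hode x hx).hasDerivWithinAt.mul ((hderivM x hx).exp)
      have h2 := hprimD (fun s => Q s * Real.exp (M s)) hEcont hEI x hx
      have h3 := h1.sub h2
      convert h3 using 1
      · rfl
      · rfl
      · rfl
      ring
    have hconst := constant_of_has_deriv_right_zero
      (f := F) (a := t0) (b := t)
      (fun x hx => ((hFderiv x hx.1).continuousWithinAt).mono Icc_subset_Ici_self)
      (fun x hx => (hFderiv x hx.1).mono (Ici_subset_Ici.mpr hx.1))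
      t (right_mem_Icc.mpr ht)
    have hsplitQ := aux_split t0 t0 t (fun s => Q s * Real.exp (M s)) hEI le_rfl ht
    simp only [hF, intervalIntegral.integral_same, sub_zero] at hconst
    rw [hyp]
    linarith
  -- the bound
  have key : ∀ t, t0 ≤ t →
      |y t - yp| ≤ Real.exp A * ∫ τ in Ioi t, (|yp| * |lam τ| + |Q τ|) := by
    intro t ht
    set G : ℝ := ∫ s in Ioi t, Q s * Real.exp (M s) with hG
    have hMne : Real.exp (M t) ≠ 0 := (Real.exp_pos _).ne'
    have hyt : y t = (yp - G) * Real.exp (-(M t)) := by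
      have := hcons t ht
      rw [Real.exp_neg]
      field_simp
      linarith
    have hid : y t - yp = yp * (Real.exp (-(M t)) - 1) - Real.exp (-(M t)) * G := by
      rw [hyt]; ring
    have hT1 : |yp * (Real.exp (-(M t)) - 1)|
        ≤ |yp| * ((∫ τ in Ioi t, |lam τ|) * Real.exp A) := by
      rw [abs_mul]
      apply mul_le_mul_of_nonneg_left _ (abs_nonneg _)
      calc |Real.exp (-(M t)) - 1| ≤ |(-(M t))| * Real.exp |(-(M t))| :=
            aux_abs_exp_sub_one_le _
        _ ≤ (∫ τ in Ioi t, |lam τ|) * Real.exp A := by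
            rw [abs_neg]
            apply mul_le_mul (hMabs t ht) (Real.exp_le_exp.mpr (hMA t ht))
              (Real.exp_pos _).le (htail_nonneg t)
    -- bound on G
    have hGb : |G| ≤ Real.exp A * Real.exp (M t) * ∫ τ in Ioi t, |Q τ| := by
      have step1 : |G| ≤ ∫ s in Ioi t, |Q s| * Real.exp (M s) := by
        simpa [Real.norm_eq_abs, abs_mul, Real.abs_exp] using norm_integral_le_integral_norm
          (μ := volume.restrict (Ioi t)) (fun s => Q s * Real.exp (M s))
      have step2 : (∫ s in Ioi t, |Q s| * Real.exp (M s))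
          ≤ ∫ s in Ioi t, |Q s| * (Real.exp A * Real.exp (M t)) := by
        apply setIntegral_mono_on
        · have : (fun s => |Q s| * Real.exp (M s)) = fun s => |Q s * Real.exp (M s)| := by
            funext s; rw [abs_mul, Real.abs_exp]
          rw [this]
          exact (hEI.mono_set (hsubIci ht)).abs
        · exact (IntegrableOn.mono_set hQI.abs (hsubIci ht)).mul_const _
        · exact measurableSet_Ioi
        · intro s hs
          apply mul_le_mul_of_nonneg_left _ (abs_nonneg _)
          rw [← Real.exp_add]
          apply Real.exp_le_exp.mpr
          -- M s ≤ A + M t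
          have hsplit := aux_split t0 t s lam hlamI ht (le_of_lt hs)
          have hIb : |∫ τ in t..s, lam τ| ≤ A := by
            calc |∫ τ in t..s, lam τ| ≤ ∫ τ in t..s, |lam τ| := by
                  simpa [Real.norm_eq_abs] using
                    intervalIntegral.norm_integral_le_integral_norm (le_of_lt hs)
                    (f := lam) (μ := volume)
              _ = ∫ τ in Ioc t s, |lam τ| :=
                  intervalIntegral.integral_of_le (le_of_lt hs)
              _ ≤ A := setIntegral_mono_set
                  (hlamAbsI.mono_set Ioi_subset_Ici_self)
                  (Filter.Eventually.of_forall fun τ => abs_nonneg _)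
                  (HasSubset.Subset.eventuallyLE
                    (fun τ hτ => lt_of_le_of_lt ht hτ.1))
          have : M s = M t - ∫ τ in t..s, lam τ := by simp only [hM]; linarith
          rw [this]
          have := abs_le.mp hIb
          linarith
      have step3 : (∫ s in Ioi t, |Q s| * (Real.exp A * Real.exp (M t)))
          = Real.exp A * Real.exp (M t) * ∫ τ in Ioi t, |Q τ| := by
        rw [integral_mul_const]
        exact mul_comm _ _
      linarith [step1.trans (step2.trans_eq step3)]
    have hT2 : Real.exp (-(M t)) * |G| ≤ Real.exp A * ∫ τ in Ioi t, |Q τ| := by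
      have := mul_le_mul_of_nonneg_left hGb (Real.exp_pos (-(M t))).le
      calc Real.exp (-(M t)) * |G|
          ≤ Real.exp (-(M t)) * (Real.exp A * Real.exp (M t) * ∫ τ in Ioi t, |Q τ|) := this
        _ = Real.exp A * ∫ τ in Ioi t, |Q τ| := by
            rw [Real.exp_neg]; field_simp
    have hQtail : (0:ℝ) ≤ ∫ τ in Ioi t, |Q τ| :=
      setIntegral_nonneg measurableSet_Ioi (fun τ _ => abs_nonneg _)
    have hsum : (∫ τ in Ioi t, (|yp| * |lam τ| + |Q τ|))
        = |yp| * (∫ τ in Ioi t, |lam τ|) + ∫ τ in Ioi t, |Q τ| := by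
      rw [integral_add ((hlamAbsI.mono_set (hsubIci ht)).const_mul _)
        (IntegrableOn.mono_set hQI.abs (hsubIci ht)), integral_const_mul]
    calc |y t - yp| ≤ |yp * (Real.exp (-(M t)) - 1)| + |Real.exp (-(M t)) * G| := by
          rw [hid]; exact abs_sub _ _
      _ ≤ |yp| * ((∫ τ in Ioi t, |lam τ|) * Real.exp A)
          + Real.exp A * ∫ τ in Ioi t, |Q τ| := by
          have : |Real.exp (-(M t)) * G| = Real.exp (-(M t)) * |G| := by
            rw [abs_mul, Real.abs_exp]
          rw [this]
          exact add_le_add hT1 hT2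
      _ = Real.exp A * ∫ τ in Ioi t, (|yp| * |lam τ| + |Q τ|) := by
          rw [hsum]; ring
  constructor
  · exact key
  · -- convergence
    have hhI : IntegrableOn (fun τ => |yp| * |lam τ| + |Q τ|) (Ici t0) :=
      (hlamAbsI.const_mul _).add hQI.abs
    have htails : Filter.Tendsto (fun t => ∫ τ in Ioi t, (|yp| * |lam τ| + |Q τ|))
        Filter.atTop (nhds 0) := by
      have h1 : Filter.Tendsto (fun t => ∫ τ in t0..t, (|yp| * |lam τ| + |Q τ|))
          Filter.atTop (nhds (∫ τ in Ioi t0, (|yp| * |lam τ| + |Q τ|))) :=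
        intervalIntegral_tendsto_integral_Ioi t0 (hhI.mono_set Ioi_subset_Ici_self)
          Filter.tendsto_id
      have h2 := (tendsto_const_nhds (x := ∫ τ in Ioi t0, (|yp| * |lam τ| + |Q τ|))
        (f := Filter.atTop (α := ℝ))).sub h1
      rw [sub_self] at h2
      apply h2.congr'
      filter_upwards [Filter.eventually_ge_atTop t0] with t ht
      have haux := aux_split t0 t0 t (fun τ => |yp| * |lam τ| + |Q τ|) hhI le_rfl ht
      linarith
    have habs : Filter.Tendsto (fun t => |y t - yp|) Filter.atTop (nhds 0) := by
      have hg : Filter.Tendsto (fun t => Real.exp A * ∫ τ in Ioi t, (|yp| * |lam τ| + |Q τ|))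
          Filter.atTop (nhds 0) := by
        simpa using htails.const_mul (Real.exp A)
      apply squeeze_zero' (Filter.Eventually.of_forall fun t => abs_nonneg _) _ hg
      filter_upwards [Filter.eventually_ge_atTop t0] with t ht
      exact key t ht
    have hdiff : Filter.Tendsto (fun t => y t - yp) Filter.atTop (nhds 0) := by
      rw [tendsto_zero_iff_norm_tendsto_zero]
      simpa [Real.norm_eq_abs] using habs
    have := hdiff.add (tendsto_const_nhds (x := yp) (f := Filter.atTop (α := ℝ)))
    simpa using this
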